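/- Let 0 < φ_1 < φ_2 < π/2 and G a point at distance ρ_G > 0 from the origin. Every point V on the segment from G to G_F = (ρ_G sin φ_1/sin φ_2, ψ_G + φ_2 − φ_1) satisfies |V| ≤ ρ_G, i.e. in the Side case the forward straight-reachable set boundary chord S_{G_F} lies inside the closed disk of radius ρ_G centered at the origin. -/

import Mathlib

/-- Cartesian point of polar coordinates. -/
noncomputable def toC (ρ ψ : ℝ) : ℂ := (ρ : ℂ) * Complex.exp (ψ * Complex.I)

/-- Side case: every point `V` on the chord from `G` to
`G_F = (ρ_G sin φ₁ / sin φ₂, ψ_G + φ₂ - φ₁)` lies in the closed disk of radius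
`ρ_G` centered at the origin. -/
theorem stmt13 (φ₁ φ₂ ρG ψG : ℝ)
    (h1 : 0 < φ₁) (h12 : φ₁ < φ₂) (h2 : φ₂ < Real.pi / 2) (hρ : 0 < ρG) :
    ∀ V ∈ segment ℝ (toC ρG ψG)
        (toC (ρG * Real.sin φ₁ / Real.sin φ₂) (ψG + (φ₂ - φ₁))),
      ‖V‖ ≤ ρG := by
  have habs : ∀ ρ ψ : ℝ, ‖toC ρ ψ‖ = |ρ| := by
    intro ρ ψ
    simp [toC, Complex.norm_exp, abs_of_nonneg]
  intro V hV
  have hs1 : 0 < Real.sin φ₁ := Real.sin_pos_of_pos_of_lt_pi h1 (by linarith [Real.pi_pos])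
  have hs2 : 0 < Real.sin φ₂ := Real.sin_pos_of_pos_of_lt_pi (by linarith) (by linarith [Real.pi_pos])
  have hle : Real.sin φ₁ ≤ Real.sin φ₂ := by
    apply Real.sin_le_sin_of_le_of_le_pi_div_two (by linarith) (le_of_lt h2) (le_of_lt h12)
  have h1' : toC ρG ψG ∈ Metric.closedBall (0 : ℂ) ρG := by
    simp [Complex.dist_eq, habs, abs_of_pos hρ]
  have h2' : toC (ρG * Real.sin φ₁ / Real.sin φ₂) (ψG + (φ₂ - φ₁)) ∈
      Metric.closedBall (0 : ℂ) ρG := by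
    simp only [Metric.mem_closedBall, Complex.dist_eq, sub_zero, habs]
    rw [abs_of_nonneg (by positivity)]
    rw [div_le_iff₀ hs2]
    nlinarith
  have := (convex_closedBall (0 : ℂ) ρG).segment_subset h1' h2' hV
  simpa [Complex.dist_eq] using this
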